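/- Let M⊥ : V₀ → V₀, M⊥ x = (I − P) M x, be boundedly invertible on V₀ = u^⊥. Suppose ‖x‖ = 1 and ‖δ⊥(x)‖ ≤ min{√a, (1/2)[(1 + γ/(Γ K C_C ‖M⊥^{-1}‖))^{1/2} − 1]}. Then ‖δ⊥(x)‖ ≤ 2‖M⊥^{-1}‖ · ‖(I − P) r(x)‖ ≤ 2‖M⊥^{-1}‖ · ‖r(x)‖. -/

import Mathlib

open scoped RealInnerProductSpace

lemma cs_form {H : Type*} [NormedAddCommGroup H] [InnerProductSpace ℝ H]
    (C : H →L[ℝ] H) (hCsymm : ∀ y z, ⟪C y, z⟫ = ⟪y, C z⟫)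
    (hpos : ∀ y, 0 ≤ ⟪C y, y⟫) (v w : H) :
    ⟪C v, w⟫ ^ 2 ≤ ⟪C v, v⟫ * ⟪C w, w⟫ := by
  have key : ∀ t : ℝ, 0 ≤ ⟪C w, w⟫ * (t * t) + (2 * ⟪C v, w⟫) * t + ⟪C v, v⟫ := by
    intro t
    have h := hpos (v + t • w)
    have hsw : ⟪C w, v⟫ = ⟪C v, w⟫ := by
      rw [hCsymm w v, real_inner_comm]
    simp only [map_add, map_smul, inner_add_left, inner_add_right, real_inner_smul_left,
      inner_smul_right, smul_eq_mul] at h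
    rw [hsw] at h
    nlinarith [h]
  have h2 := discrim_le_zero key
  simp only [discrim] at h2
  nlinarith [h2]

lemma projle {H : Type*} [NormedAddCommGroup H] [InnerProductSpace ℝ H]
    (u : H) (hu : u ≠ 0) (v : H) :
    ‖v - (⟪v, u⟫ / ⟪u, u⟫) • u‖ ≤ ‖v‖ := by
  have huu : ⟪u, u⟫ ≠ 0 := by
    rw [real_inner_self_eq_norm_sq]
    have : ‖u‖ ≠ 0 := norm_ne_zero_iff.mpr hu
    positivity
  set c := ⟪v, u⟫ / ⟪u, u⟫ with hc
  have horth : ⟪v - c • u, c • u⟫ = 0 := by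
    rw [inner_smul_right, inner_sub_left, real_inner_smul_left, hc]
    field_simp; ring
  have hsq : ‖v‖ ^ 2 = ‖v - c • u‖ ^ 2 + ‖c • u‖ ^ 2 := by
    have h3 := norm_add_sq_real (v - c • u) (c • u)
    simp only [sub_add_cancel] at h3
    rw [h3, horth]; ring
  nlinarith [norm_nonneg (v - c • u), norm_nonneg v, norm_nonneg (c • u)]

lemma scalar_cxx (a P Q X S : ℝ) (ha : 0 < a) (haP : 3*a ≤ P) (haQ : Q ≤ a)
    (hQ0 : 0 ≤ Q) (hX2 : X^2 ≤ P*Q) (hS : S = Q + 2*X + P) (hS0 : 0 < S) :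
    a ≤ 2*S := by
  by_contra hcon
  push_neg at hcon
  nlinarith [hX2, sq_nonneg (P - a), mul_nonneg (sub_nonneg.mpr haQ)
    (by nlinarith : (0:ℝ) ≤ 2 * P - Q - a), sq_nonneg S]

set_option maxHeartbeats 1000000 in
lemma scalar_crunch (g G L Cc Mi e cxx nCx d : ℝ)
    (hg : 0 < g) (hG : 0 < G) (hL : 0 < L) (hCc : 0 < Cc) (hMi : 0 < Mi)
    (he0 : 0 ≤ e) (hd0 : 0 ≤ d) (hnCx0 : 0 ≤ nCx) (hcxx0 : 0 < cxx)
    (hecxx : e * cxx ≤ G * d ^ 2)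
    (hcxxl : g ≤ 8 * L * cxx)
    (hnCx2 : nCx ^ 2 ≤ Cc * cxx)
    (hdq : d * (8 * G * L * Cc * Mi) ≤ g)
    (hglC : g ≤ L * Cc) :
    e * nCx ≤ d / (2 * Mi) := by
  have k0 : e * g ≤ 8 * L * G * d ^ 2 := by nlinarith [hecxx, hcxxl, he0, hL]
  have k1a : e ^ 2 * nCx ^ 2 ≤ Cc * (e ^ 2 * cxx) := by nlinarith [hnCx2, sq_nonneg e]
  have k1b : (e ^ 2 * cxx) * g ≤ (G * d ^ 2) * (8 * L * G * d ^ 2) := by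
    have h := mul_le_mul hecxx k0 (mul_nonneg he0 hg.le)
      (by positivity : (0:ℝ) ≤ G * d ^ 2)
    nlinarith [h]
  have k1 : (e * nCx) ^ 2 * g ≤ 8 * L * G ^ 2 * Cc * d ^ 4 := by
    nlinarith [k1a, k1b, hCc, hg, mul_nonneg (mul_nonneg (sq_nonneg e) hcxx0.le) hg.le]
  have k2' : 64 * L ^ 2 * G ^ 2 * Cc ^ 2 * Mi ^ 2 * d ^ 2 ≤ g ^ 2 := by
    nlinarith [hdq, mul_nonneg hd0 (by positivity : (0:ℝ) ≤ 8 * G * L * Cc * Mi), hg]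
  have k2 : (8 * L * G ^ 2 * Cc * d ^ 4) * (4 * Mi ^ 2) ≤ g * d ^ 2 := by
    have m1 : 64 * L^2 * G^2 * Cc^2 * Mi^2 * d^2 * d^2 ≤ g^2 * d^2 :=
      mul_le_mul_of_nonneg_right k2' (sq_nonneg d)
    have m2 : g^2 * d^2 ≤ 2*L*Cc*g*d^2 := by
      nlinarith [mul_le_mul_of_nonneg_left hglC hg.le, sq_nonneg d, hg]
    have m3 : (2*L*Cc) * ((8 * L * G ^ 2 * Cc * d ^ 4) * (4 * Mi ^ 2)) ≤
        (2*L*Cc) * (g * d ^ 2) := by ring_nf; ring_nf at m1 m2 ⊢; linarith [m1, m2]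
    exact (mul_le_mul_iff_right₀ (by positivity)).mp m3
  have k3 : (e * nCx * (2 * Mi)) ^ 2 ≤ d ^ 2 := by
    have hcomb : (e * nCx) ^ 2 * g * (4 * Mi ^ 2) ≤ g * d ^ 2 := by
      calc (e * nCx) ^ 2 * g * (4 * Mi ^ 2)
          ≤ (8 * L * G ^ 2 * Cc * d ^ 4) * (4 * Mi ^ 2) := by
            nlinarith [k1, sq_nonneg Mi, hMi]
        _ ≤ g * d ^ 2 := k2
    nlinarith [hcomb, hg]
  have hnn : 0 ≤ e * nCx * (2 * Mi) := by positivity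
  rw [le_div_iff₀ (by positivity : (0:ℝ) < 2 * Mi)]
  nlinarith [k3, hnn, hd0]

set_option maxHeartbeats 1000000 in
theorem stmt11 {H : Type*} [NormedAddCommGroup H] [InnerProductSpace ℝ H] [CompleteSpace H]
    (A C : H →L[ℝ] H)
    (hAsymm : ∀ y z, ⟪A y, z⟫ = ⟪y, A z⟫) (hCsymm : ∀ y z, ⟪C y, z⟫ = ⟪y, C z⟫)
    (hCpos : ∀ y, y ≠ 0 → 0 < ⟪C y, y⟫)
    (γ Γ : ℝ) (hγ : 0 < γ)
    (hA : ∀ y, γ * ‖y‖ ^ 2 ≤ ⟪A y, y⟫ ∧ ⟪A y, y⟫ ≤ Γ * ‖y‖ ^ 2)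
    (lam : ℝ) (hlam : 0 < lam) (u : H) (hu : u ≠ 0) (heig : A u = lam • C u)
    (hmin : ∀ y, y ≠ 0 → lam ≤ ⟪A y, y⟫ / ⟪C y, y⟫)
    (Minv : ℝ) (hMinv : 0 < Minv)
    (hMinvB : ∀ y, ⟪y, u⟫ = 0 →
      ‖y‖ ≤ Minv * ‖(A y - lam • C y) - (⟪A y - lam • C y, u⟫ / ⟪u, u⟫) • u‖)
    (x : H) (hx : ‖x‖ = 1)
    (hδ : ‖x - (⟪x, u⟫ / ⟪u, u⟫) • u‖ ≤
      min (Real.sqrt (γ / (4 * Γ)))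
        ((1 / 2) * (Real.sqrt (1 + γ / (Γ * (2 * lam) * ‖C‖ * Minv)) - 1)))
    (hray : ⟪A x, x⟫ / ⟪C x, x⟫ - lam ≤
      (2 * Γ * (2 * lam) * ‖C‖ / γ) * ‖x - (⟪x, u⟫ / ⟪u, u⟫) • u‖ ^ 2) :
    ‖x - (⟪x, u⟫ / ⟪u, u⟫) • u‖ ≤
        2 * Minv * ‖(A x - (⟪A x, x⟫ / ⟪C x, x⟫) • C x) -
          (⟪A x - (⟪A x, x⟫ / ⟪C x, x⟫) • C x, u⟫ / ⟪u, u⟫) • u‖ ∧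
      2 * Minv * ‖(A x - (⟪A x, x⟫ / ⟪C x, x⟫) • C x) -
          (⟪A x - (⟪A x, x⟫ / ⟪C x, x⟫) • C x, u⟫ / ⟪u, u⟫) • u‖ ≤
        2 * Minv * ‖A x - (⟪A x, x⟫ / ⟪C x, x⟫) • C x‖ := by
  have hpos : ∀ y, 0 ≤ ⟪C y, y⟫ := by
    intro y
    by_cases hy : y = 0
    · simp [hy]
    · exact (hCpos y hy).le
  have hLC : ∀ y, lam * ⟪C y, y⟫ ≤ ⟪A y, y⟫ := by
    intro y
    by_cases hy : y = 0
    · simp [hy]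
    · have h1 := hmin y hy
      have h2 := hCpos y hy
      rw [le_div_iff₀ h2] at h1
      linarith
  have hxne : x ≠ 0 := by
    intro h; rw [h] at hx; simp at hx
  have hcxx : 0 < ⟪C x, x⟫ := hCpos x hxne
  have huu : ⟪u, u⟫ ≠ 0 := by
    rw [real_inner_self_eq_norm_sq]
    have : ‖u‖ ≠ 0 := norm_ne_zero_iff.mpr hu
    positivity
  set α : ℝ := ⟪x, u⟫ / ⟪u, u⟫ with hαdef
  set δ : H := x - α • u with hδdef
  set lamx : ℝ := ⟪A x, x⟫ / ⟪C x, x⟫ with hlamxdef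
  set r : H := A x - lamx • C x with hrdef
  set d : ℝ := ‖δ‖ with hddef
  set R : ℝ := ‖r - (⟪r, u⟫ / ⟪u, u⟫) • u‖ with hRdef
  -- second part of the conclusion
  have hsecond : 2 * Minv * R ≤ 2 * Minv * ‖r‖ := by
    apply mul_le_mul_of_nonneg_left (projle u hu r)
    positivity
  have hd0 : (0:ℝ) ≤ d := norm_nonneg _
  have hδu : ⟪δ, u⟫ = 0 := by
    rw [hδdef, inner_sub_left, real_inner_smul_left, hαdef]
    field_simp; ring
  -- basic scalar facts
  have hGg : γ ≤ Γ := by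
    have h1 := (hA x).1
    have h2 := (hA x).2
    rw [hx] at h1 h2
    simpa using le_trans h1 h2
  have hG0 : 0 < Γ := lt_of_lt_of_le hγ hGg
  have hCc0 : 0 < ‖C‖ := by
    have h1 : ⟪C x, x⟫ ≤ ‖C x‖ * ‖x‖ := real_inner_le_norm _ _
    have h2 : ‖C x‖ ≤ ‖C‖ * ‖x‖ := C.le_opNorm x
    rw [hx] at h1 h2
    linarith [h1, h2, hcxx]
  have heigin : ⟪A u, u⟫ = lam * ⟪C u, u⟫ := by rw [heig, real_inner_smul_left]
  have hu2 : 0 < ‖u‖ ^ 2 := by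
    have : ‖u‖ ≠ 0 := norm_ne_zero_iff.mpr hu
    positivity
  have hcu : γ * ‖u‖ ^ 2 ≤ lam * ⟪C u, u⟫ := by
    rw [← heigin]; exact (hA u).1
  have hglC : γ ≤ lam * ‖C‖ := by
    have h1 : ⟪C u, u⟫ ≤ ‖C u‖ * ‖u‖ := real_inner_le_norm _ _
    have h2 : ‖C u‖ ≤ ‖C‖ * ‖u‖ := C.le_opNorm u
    have m1 := mul_le_mul_of_nonneg_left h1 hlam.le
    have m3 := mul_le_mul_of_nonneg_left
      (mul_le_mul_of_nonneg_right h2 (norm_nonneg u)) hlam.le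
    have key : γ * ‖u‖ ^ 2 ≤ (lam * ‖C‖) * ‖u‖ ^ 2 := by
      have hsq : ‖u‖ ^ 2 = ‖u‖ * ‖u‖ := sq (‖u‖) ▸ by ring
      nlinarith [hcu, m1, m3]
    exact le_of_mul_le_mul_right key hu2
  -- bounds on d from hδ
  have hd2 : d ^ 2 ≤ γ / (4 * Γ) := by
    have h1 : d ≤ Real.sqrt (γ / (4 * Γ)) := le_trans hδ (min_le_left _ _)
    have h2 : (0:ℝ) ≤ γ / (4 * Γ) := by positivity
    calc d ^ 2 ≤ (Real.sqrt (γ / (4 * Γ))) ^ 2 := by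
          exact pow_le_pow_left₀ hd0 h1 2
      _ = γ / (4 * Γ) := Real.sq_sqrt h2
  have hdq : d * (8 * Γ * lam * ‖C‖ * Minv) ≤ γ := by
    set c : ℝ := γ / (Γ * (2 * lam) * ‖C‖ * Minv) with hcdef
    have hc0 : 0 < c := by positivity
    have hs : Real.sqrt (1 + c) ≤ 1 + c / 2 := by
      have h1 : (1 : ℝ) + c ≤ (1 + c / 2) ^ 2 := by linarith [sq_nonneg c]
      calc Real.sqrt (1 + c) ≤ Real.sqrt ((1 + c / 2) ^ 2) := Real.sqrt_le_sqrt h1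
        _ = 1 + c / 2 := Real.sqrt_sq (by positivity)
    have h1 : d ≤ (1/2) * (Real.sqrt (1 + c) - 1) := le_trans hδ (min_le_right _ _)
    have h2 : d ≤ c / 4 := by linarith
    have h3 : c / 4 = γ / (8 * Γ * lam * ‖C‖ * Minv) := by
      rw [hcdef]; ring
    rw [h3] at h2
    have h4 : 0 < 8 * Γ * lam * ‖C‖ * Minv := by positivity
    calc d * (8 * Γ * lam * ‖C‖ * Minv)
        ≤ (γ / (8 * Γ * lam * ‖C‖ * Minv)) * (8 * Γ * lam * ‖C‖ * Minv) := by
          exact mul_le_mul_of_nonneg_right h2 h4.le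
      _ = γ := by field_simp
  have hd14 : d ^ 2 ≤ 1 / 4 := by
    have : γ / (4 * Γ) ≤ 1 / 4 := by
      rw [div_le_div_iff₀ (by positivity) (by norm_num)]
      linarith
    linarith
  -- decomposition of x
  have hxeq : x = δ + α • u := by rw [hδdef]; abel
  have hnormsplit : d ^ 2 + α ^ 2 * ‖u‖ ^ 2 = 1 := by
    have h3 := norm_add_sq_real δ (α • u)
    rw [← hxeq, hx] at h3
    have horth : ⟪δ, α • u⟫ = 0 := by rw [inner_smul_right, hδu]; ring
    rw [horth] at h3
    have h4 : ‖α • u‖ ^ 2 = α ^ 2 * ‖u‖ ^ 2 := by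
      rw [norm_smul]; simp [mul_pow, sq_abs]
    rw [h4] at h3; rw [hddef]; linarith
  -- expansion of symmetric forms
  have expand : ∀ (T : H →L[ℝ] H), (∀ y z, ⟪T y, z⟫ = ⟪y, T z⟫) →
      ⟪T x, x⟫ = ⟪T δ, δ⟫ + 2 * α * ⟪T u, δ⟫ + α ^ 2 * ⟪T u, u⟫ := by
    intro T hT
    have h1 : ⟪T δ, u⟫ = ⟪T u, δ⟫ := by rw [hT δ u, real_inner_comm]
    have h2 : ⟪T x, x⟫ = ⟪T (δ + α • u), δ + α • u⟫ := by rw [← hxeq]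
    rw [h2]
    simp only [map_add, map_smul, inner_add_left, inner_add_right, real_inner_smul_left,
      real_inner_smul_right]
    rw [h1]; ring
  have eA := expand A hAsymm
  have eC := expand C hCsymm
  have hcrossA : ⟪A u, δ⟫ = lam * ⟪C u, δ⟫ := by rw [heig, real_inner_smul_left]
  have identU : ⟪A x, x⟫ - lam * ⟪C x, x⟫ = ⟪A δ, δ⟫ - lam * ⟪C δ, δ⟫ := by
    rw [eA, eC, hcrossA, heigin]; ring
  set e : ℝ := lamx - lam with hedef
  have he0 : 0 ≤ e := by
    have := hmin x hxne
    rw [hedef, hlamxdef]; linarith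
  have hecxx : e * ⟪C x, x⟫ ≤ Γ * d ^ 2 := by
    have h1 : e * ⟪C x, x⟫ = ⟪A x, x⟫ - lam * ⟪C x, x⟫ := by
      rw [hedef, hlamxdef]
      field_simp
    rw [h1, identU]
    have h2 := (hA δ).2
    have h3 := mul_nonneg hlam.le (hpos δ)
    rw [← hddef] at h2
    linarith
  -- lower bound on ⟪C x, x⟫
  have hcxxl : γ ≤ 8 * lam * ⟪C x, x⟫ := by
    set P : ℝ := α ^ 2 * ⟪C u, u⟫ with hPdef
    set Q : ℝ := ⟪C δ, δ⟫ with hQdef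
    set X : ℝ := α * ⟪C u, δ⟫ with hXdef
    have hexpC : ⟪C x, x⟫ = Q + 2 * X + P := by rw [eC]; ring
    have hX2 : X ^ 2 ≤ P * Q := by
      have hcs := cs_form C hCsymm hpos u δ
      have h5 := mul_le_mul_of_nonneg_left hcs (sq_nonneg α)
      rw [hXdef, hPdef, hQdef]
      linarith [h5]
    set a : ℝ := γ / (4 * lam) with hadef
    have ha0 : 0 < a := by positivity
    have haP : 3 * a ≤ P := by
      have h1 : γ * (1 - d ^ 2) ≤ lam * P := by
        have h5 := mul_le_mul_of_nonneg_left hcu (sq_nonneg α)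
        have e0 : 1 - d ^ 2 = α ^ 2 * ‖u‖ ^ 2 := by linarith [hnormsplit]
        rw [hPdef, e0]
        linarith [h5]
      have h2 : γ * d ^ 2 ≤ γ * (1/4) := mul_le_mul_of_nonneg_left hd14 hγ.le
      have h4 : γ * 3 ≤ lam * P * 4 := by linarith
      calc 3 * a = (3 * γ) / (4 * lam) := by rw [hadef]; ring
        _ ≤ P := by rw [div_le_iff₀ (by positivity : (0:ℝ) < 4 * lam)]; linarith
    have haQ : Q ≤ a := by
      have h1 : lam * Q ≤ ⟪A δ, δ⟫ := hLC δ
      have h2 : ⟪A δ, δ⟫ ≤ Γ * d ^ 2 := by have := (hA δ).2; rw [← hddef] at this; exact this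
      have h3 : Γ * d ^ 2 ≤ γ / 4 := by
        calc Γ * d ^ 2 ≤ Γ * (γ / (4 * Γ)) := mul_le_mul_of_nonneg_left hd2 hG0.le
          _ = γ / 4 := by field_simp
      rw [hadef, le_div_iff₀ (by positivity : (0:ℝ) < 4 * lam)]
      linarith
    have hQ0 : 0 ≤ Q := hpos δ
    have hS0 : 0 < Q + 2 * X + P := by rw [← hexpC]; exact hcxx
    have hgoal : a ≤ 2 * (Q + 2 * X + P) :=
      scalar_cxx a P Q X (Q + 2 * X + P) ha0 haP haQ hQ0 hX2 rfl hS0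
    rw [hexpC]
    rw [hadef, div_le_iff₀ (by positivity : (0:ℝ) < 4 * lam)] at hgoal
    linarith [hgoal]
  -- ‖C x‖^2 ≤ ‖C‖ ⟪C x, x⟫
  have hnCx2 : ‖C x‖ ^ 2 ≤ ‖C‖ * ⟪C x, x⟫ := by
    have hcs := cs_form C hCsymm hpos x (C x)
    have h1 : ⟪C x, C x⟫ = ‖C x‖ ^ 2 := real_inner_self_eq_norm_sq _
    have h2 : ⟪C (C x), C x⟫ ≤ ‖C‖ * ‖C x‖ ^ 2 := by
      calc ⟪C (C x), C x⟫ ≤ ‖C (C x)‖ * ‖C x‖ := real_inner_le_norm _ _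
        _ ≤ (‖C‖ * ‖C x‖) * ‖C x‖ := by
            exact mul_le_mul_of_nonneg_right (C.le_opNorm _) (norm_nonneg _)
        _ = ‖C‖ * ‖C x‖ ^ 2 := by ring
    by_cases hn : ‖C x‖ = 0
    · have h0 : (0:ℝ) ≤ ‖C‖ * ⟪C x, x⟫ := mul_nonneg (norm_nonneg _) (hpos x)
      rw [hn]
      simpa using h0
    · have hn0 : 0 < ‖C x‖ := lt_of_le_of_ne (norm_nonneg _) (Ne.symm hn)
      rw [h1] at hcs
      have m := mul_le_mul_of_nonneg_left h2 (hpos x)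
      have key2 : ‖C x‖ ^ 2 * ‖C x‖ ^ 2 ≤ (‖C‖ * ⟪C x, x⟫) * ‖C x‖ ^ 2 := by
        nlinarith [hcs, m]
      exact le_of_mul_le_mul_right key2 (by positivity)
  -- the operator identity and the main norm bound
  have hMδ : A δ - lam • C δ = A x - lam • C x := by
    rw [hδdef]
    simp only [map_sub, map_smul, heig]
    module
  have hv : A x - lam • C x = r + e • C x := by
    rw [hrdef, hedef]
    module
  have hsplit : (A δ - lam • C δ) - (⟪A δ - lam • C δ, u⟫ / ⟪u, u⟫) • u =
      (r - (⟪r, u⟫ / ⟪u, u⟫) • u) + e • (C x - (⟪C x, u⟫ / ⟪u, u⟫) • u) := by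
    rw [hMδ, hv, inner_add_left, real_inner_smul_left]
    have h1 : (⟪r, u⟫ + e * ⟪C x, u⟫) / ⟪u, u⟫ =
        ⟪r, u⟫ / ⟪u, u⟫ + e * (⟪C x, u⟫ / ⟪u, u⟫) := by ring
    rw [h1]
    module
  have h1 : d ≤ Minv * (R + e * ‖C x‖) := by
    have hB := hMinvB δ hδu
    rw [hsplit] at hB
    have h2 : ‖(r - (⟪r, u⟫ / ⟪u, u⟫) • u) + e • (C x - (⟪C x, u⟫ / ⟪u, u⟫) • u)‖ ≤
        R + e * ‖C x‖ := by
      calc ‖(r - (⟪r, u⟫ / ⟪u, u⟫) • u) + e • (C x - (⟪C x, u⟫ / ⟪u, u⟫) • u)‖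
          ≤ R + ‖e • (C x - (⟪C x, u⟫ / ⟪u, u⟫) • u)‖ := norm_add_le _ _
        _ = R + e * ‖C x - (⟪C x, u⟫ / ⟪u, u⟫) • u‖ := by
            rw [norm_smul, Real.norm_eq_abs, abs_of_nonneg he0]
        _ ≤ R + e * ‖C x‖ := by
            have h6 := mul_le_mul_of_nonneg_left (projle u hu (C x)) he0
            linarith [h6]
    calc d ≤ Minv * ‖(r - (⟪r, u⟫ / ⟪u, u⟫) • u) + e • (C x - (⟪C x, u⟫ / ⟪u, u⟫) • u)‖ := hB
      _ ≤ Minv * (R + e * ‖C x‖) := mul_le_mul_of_nonneg_left h2 hMinv.le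
  -- the scalar crunch: e * ‖C x‖ ≤ d / (2 * Minv)
  have h2 : e * ‖C x‖ ≤ d / (2 * Minv) :=
    scalar_crunch γ Γ lam ‖C‖ Minv e ⟪C x, x⟫ ‖C x‖ d hγ hG0 hlam hCc0 hMinv
      he0 hd0 (norm_nonneg _) hcxx hecxx hcxxl hnCx2 hdq hglC
  refine ⟨?_, hsecond⟩
  have h3 : Minv * (d / (2 * Minv)) = d / 2 := by field_simp
  have h4 : d ≤ Minv * R + d / 2 := by
    calc d ≤ Minv * (R + e * ‖C x‖) := h1
      _ ≤ Minv * (R + d / (2 * Minv)) :=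
          mul_le_mul_of_nonneg_left (by linarith [h2]) hMinv.le
      _ = Minv * R + d / 2 := by rw [mul_add, h3]
  linarith
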